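/- Let n be an even positive integer, let y ∈ ℝ^{n/2} be a nonzero vector, let x = (y, y)ᵀ ∈ ℝⁿ, and let A be the n×n block-diagonal matrix with two diagonal blocks both equal to yyᵀ (and zero off-diagonal blocks). Then cos(A, xxᵀ) = 1/√2, the matrix A has rank two, its two nonzero eigenvalues are both equal to ‖y‖₂², and the vector v₁ = (y, 0)ᵀ is an eigenvector of A for the eigenvalue ‖y‖₂² with cos(v₁, x)² = 1/2. -/

import Mathlib

open Matrix Polynomial BigOperators

/-- The Frobenius norm of a real matrix. -/
noncomputable def frob {m : Type*} [Fintype m] (A : Matrix m m ℝ) : ℝ :=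
  Real.sqrt (∑ i, ∑ j, (A i j) ^ 2)

/-- The Euclidean norm of a real vector. -/
noncomputable def nrm {m : Type*} [Fintype m] (v : m → ℝ) : ℝ :=
  Real.sqrt (∑ i, (v i) ^ 2)

lemma eval_charpoly' {n : Type*} [Fintype n] [DecidableEq n] (M : Matrix n n ℝ) (t : ℝ) :
    M.charpoly.eval t = (t • (1 : Matrix n n ℝ) - M).det := by
  rw [Matrix.charpoly, ← Polynomial.coe_evalRingHom, RingHom.map_det]
  congr 1
  ext i j
  by_cases h : i = j <;>
    simp [h, Matrix.charmatrix_apply_eq, Matrix.charmatrix_apply_ne, Matrix.one_apply]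

lemma charpoly_vecMulVec {m : ℕ} (hm : 0 < m) (y : Fin m → ℝ) :
    (vecMulVec y y).charpoly = X ^ (m - 1) * (X - C (∑ i, (y i) ^ 2)) := by
  have hs : (y ⬝ᵥ y) = ∑ i, (y i)^2 := by simp [dotProduct, sq]
  apply Polynomial.eq_of_infinite_eval_eq
  apply Set.Infinite.mono (s := {t : ℝ | t ≠ 0})
  · intro t ht
    have ht : t ≠ 0 := ht
    have key : (t • (1 : Matrix (Fin m) (Fin m) ℝ) - vecMulVec y y)
        = t • ((1 : Matrix (Fin m) (Fin m) ℝ) + vecMulVec (-(t⁻¹) • y) y) := by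
      ext i j
      by_cases h : i = j
      · simp only [h, Matrix.sub_apply, Matrix.add_apply, Matrix.smul_apply,
          Matrix.vecMulVec_apply, Matrix.one_apply_eq, Pi.smul_apply, smul_eq_mul]
        field_simp
        ring
      · simp only [h, Matrix.sub_apply, Matrix.add_apply, Matrix.smul_apply,
          Matrix.vecMulVec_apply, Matrix.one_apply_ne h, Pi.smul_apply, smul_eq_mul]
        field_simp
        ring
    rw [Set.mem_setOf_eq, eval_charpoly', key, Matrix.det_smul,
      Matrix.vecMulVec_eq (Fin 1), Matrix.det_one_add_replicateCol_mul_replicateRow]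
    simp only [eval_mul, eval_pow, eval_X, eval_sub, eval_C, dotProduct_smul, hs,
      Fintype.card_fin, smul_eq_mul]
    have hpow : t ^ m = t ^ (m - 1) * t := by
      conv_lhs => rw [show m = (m - 1) + 1 by omega]
      ring
    rw [hpow]
    field_simp
    ring
  · exact Set.Infinite.mono (fun t (ht : t ∈ Set.Ioi 0) => ne_of_gt ht) (Set.Ioi_infinite 0)

lemma rank_blockdiag {m : ℕ} (y : Fin m → ℝ) (hs : (∑ i, (y i)^2) ≠ 0) :
    (Matrix.fromBlocks (vecMulVec y y) 0 0 (vecMulVec y y)).rank = 2 := by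
  set N : Matrix (Fin m ⊕ Fin m) (Fin 1 ⊕ Fin 1) ℝ :=
    Matrix.fromBlocks (Matrix.replicateCol (Fin 1) y) 0 0 (Matrix.replicateCol (Fin 1) y) with hN
  have hA : Matrix.fromBlocks (vecMulVec y y) 0 0 (vecMulVec y y) = N * Nᵀ := by
    rw [hN, Matrix.fromBlocks_transpose, Matrix.fromBlocks_multiply]
    simp [Matrix.transpose_replicateCol, ← Matrix.vecMulVec_eq (Fin 1)]
    exact Matrix.vecMulVec_eq (Fin 1) y y
  have hD : Nᵀ * N = Matrix.diagonal (fun _ : Fin 1 ⊕ Fin 1 => ∑ i, (y i)^2) := by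
    rw [hN, Matrix.fromBlocks_transpose, Matrix.fromBlocks_multiply]
    ext (i|i) (j|j) <;>
      simp [Matrix.replicateRow_mul_replicateCol_apply, Matrix.diagonal_apply, Fin.fin_one_eq_zero i,
        Fin.fin_one_eq_zero j, dotProduct, sq]
  rw [hA, Matrix.rank_self_mul_transpose, ← Matrix.rank_transpose_mul_self, hD,
    Matrix.rank_diagonal]
  simp only [hs, ne_eq, not_false_iff]
  rw [Fintype.card_subtype]
  simp


/-- the block-diagonal matrix `A = diag(yyᵀ, yyᵀ)` and `x = (y, y)ᵀ` satisfy
`cos(A, xxᵀ) = 1/√2`, `rank A = 2`, the two nonzero eigenvalues of `A` both equal `‖y‖₂²`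
(i.e. `charpoly A = X^(2m-2) (X - ‖y‖₂²)²`), and `v₁ = (y, 0)ᵀ` is an eigenvector for the
eigenvalue `‖y‖₂²` with `cos(v₁, x)² = 1/2`. -/
theorem block_diagonal_counterexample
    (m : ℕ) (hm : 0 < m) (y : Fin m → ℝ) (hy : y ≠ 0)
    (x : Fin m ⊕ Fin m → ℝ) (hx : x = Sum.elim y y)
    (A : Matrix (Fin m ⊕ Fin m) (Fin m ⊕ Fin m) ℝ)
    (hA : A = Matrix.fromBlocks (vecMulVec y y) 0 0 (vecMulVec y y))
    (v₁ : Fin m ⊕ Fin m → ℝ) (hv : v₁ = Sum.elim y 0) :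
    (x ⬝ᵥ A.mulVec x) / ((x ⬝ᵥ x) * frob A) = 1 / Real.sqrt 2 ∧
      A.rank = 2 ∧
      A.charpoly = X ^ (2 * m - 2) * (X - C (∑ i, (y i) ^ 2)) ^ 2 ∧
      A.mulVec v₁ = (∑ i, (y i) ^ 2) • v₁ ∧
      ((v₁ ⬝ᵥ x) / (nrm v₁ * nrm x)) ^ 2 = 1 / 2 := by
  set s : ℝ := ∑ i, (y i) ^ 2 with hs_def
  obtain ⟨i₀, hi₀⟩ : ∃ i, y i ≠ 0 := by
    by_contra h
    push_neg at h
    exact hy (funext h)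
  have hs : 0 < s :=
    Finset.sum_pos' (fun i _ => sq_nonneg _) ⟨i₀, Finset.mem_univ i₀, by positivity⟩
  have hyy : y ⬝ᵥ y = s := by simp [dotProduct, sq, hs_def]
  have hBy : (vecMulVec y y).mulVec y = s • y := by
    ext i
    simp only [Matrix.mulVec, dotProduct, Matrix.vecMulVec_apply, Pi.smul_apply, smul_eq_mul,
      mul_assoc, ← Finset.mul_sum, hs_def, sq]
    ring
  have hAx : A.mulVec x = Sum.elim (s • y) (s • y) := by
    rw [hA, hx, Matrix.fromBlocks_mulVec]
    simp [hBy]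
  have hxAx : x ⬝ᵥ A.mulVec x = 2 * s ^ 2 := by
    rw [hAx, hx, sumElim_dotProduct_sumElim]
    simp only [dotProduct_smul, hyy, smul_eq_mul]
    ring
  have hxx : x ⬝ᵥ x = 2 * s := by
    rw [hx, sumElim_dotProduct_sumElim, hyy]
    ring
  have hfrob : frob A = Real.sqrt 2 * s := by
    have hsum : (∑ i, ∑ j, ((Matrix.fromBlocks (vecMulVec y y) 0 0 (vecMulVec y y)) i j) ^ 2)
        = 2 * s ^ 2 := by
      rw [Fintype.sum_sum_type]
      simp only [Fintype.sum_sum_type, Matrix.fromBlocks_apply₁₁, Matrix.fromBlocks_apply₁₂,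
        Matrix.fromBlocks_apply₂₁, Matrix.fromBlocks_apply₂₂, Matrix.zero_apply,
        Matrix.vecMulVec_apply, ne_eq, OfNat.ofNat_ne_zero, not_false_eq_true, zero_pow,
        Finset.sum_const_zero, add_zero, zero_add, mul_pow]
      simp only [← Finset.mul_sum, ← Finset.sum_mul, ← hs_def]
      ring
    rw [hA, frob, hsum]
    rw [show (2:ℝ) * s ^ 2 = 2 * (s * s) by ring, Real.sqrt_mul (by norm_num : (0:ℝ) ≤ 2),
      Real.sqrt_mul_self hs.le]
  refine ⟨?_, ?_, ?_, ?_, ?_⟩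
  · rw [hxAx, hxx, hfrob]
    have h2 : (0:ℝ) < Real.sqrt 2 := by positivity
    field_simp
  · rw [hA]; exact rank_blockdiag y hs.ne'
  · rw [hA, Matrix.charpoly_fromBlocks_zero₁₂, charpoly_vecMulVec hm, ← hs_def]
    rw [show 2 * m - 2 = (m - 1) + (m - 1) by omega]
    ring
  · rw [hA, hv, Matrix.fromBlocks_mulVec]
    ext (i | i) <;> simp [hBy]
  · have h1 : v₁ ⬝ᵥ x = s := by
      rw [hv, hx, sumElim_dotProduct_sumElim, hyy, zero_dotProduct, add_zero]
    have h2 : nrm v₁ = Real.sqrt s := by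
      rw [hv, nrm, Fintype.sum_sum_type]
      simp [hs_def]
    have h3 : nrm x = Real.sqrt (2 * s) := by
      rw [hx, nrm, Fintype.sum_sum_type]
      simp only [Sum.elim_inl, Sum.elim_inr]
      rw [← hs_def, show s + s = 2 * s by ring]
    rw [h1, h2, h3, div_pow, mul_pow, Real.sq_sqrt hs.le, Real.sq_sqrt (by positivity)]
    field_simp
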